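/- Let F be a formal group law over a commutative ring R, let A be a finite abelian group, and let ℓ : A → R be a function with ℓ(0)=0, each ℓ(a) nilpotent, and ℓ(a+b) = F(ℓ(a),ℓ(b)) for all a,b ∈ A. Then the discriminant ∏_{a≠b ∈ A}(ℓ(a)-ℓ(b)) equals a unit of R times ∏_{0≠c ∈ A} ℓ(c)^{|A|}. -/

import Mathlib

open Finset

noncomputable section

namespace FGL

variable {R : Type*} [CommRing R]

/-- The monomial index `x^i y^j` for two-variable power series. -/
def mono (i j : ℕ) : Fin 2 →₀ ℕ := Finsupp.single 0 i + Finsupp.single 1 j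

/-- Substitute `(g(t), t)` into a two-variable power series `F`; this is the honest
substitution `F(g(t), t)` whenever `g` has zero constant term. -/
def subst2 (F : MvPowerSeries (Fin 2) R) (g : PowerSeries R) : PowerSeries R :=
  PowerSeries.mk fun n => ∑ i ∈ Finset.range (n + 1), ∑ j ∈ Finset.range (n + 1),
    MvPowerSeries.coeff (mono i j) F * PowerSeries.coeff (n - j) (g ^ i)

/-- The three-variable power series `F(F(x,y),z)` (for `F` with zero constant term). -/
def assocLeft (F : MvPowerSeries (Fin 2) R) : MvPowerSeries (Fin 3) R :=
  fun m => ∑ i ∈ Finset.range (m 0 + m 1 + 1),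
    MvPowerSeries.coeff (mono i (m 2)) F *
      MvPowerSeries.coeff (mono (m 0) (m 1)) (F ^ i)

/-- The three-variable power series `F(x,F(y,z))` (for `F` with zero constant term). -/
def assocRight (F : MvPowerSeries (Fin 2) R) : MvPowerSeries (Fin 3) R :=
  fun m => ∑ j ∈ Finset.range (m 1 + m 2 + 1),
    MvPowerSeries.coeff (mono (m 0) j) F *
      MvPowerSeries.coeff (mono (m 1) (m 2)) (F ^ j)

/-- A (one-dimensional, commutative) formal group law over `R`: a two-variable power
series `F(x,y)` with `F(x,0)=x`, `F(0,y)=y`, `F(x,y)=F(y,x)` and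
`F(F(x,y),z)=F(x,F(y,z))`. -/
structure FormalGroupLaw (R : Type*) [CommRing R] where
  F : MvPowerSeries (Fin 2) R
  left_unit : ∀ i : ℕ, MvPowerSeries.coeff (mono i 0) F = if i = 1 then 1 else 0
  right_unit : ∀ j : ℕ, MvPowerSeries.coeff (mono 0 j) F = if j = 1 then 1 else 0
  comm : ∀ i j : ℕ, MvPowerSeries.coeff (mono i j) F = MvPowerSeries.coeff (mono j i) F
  assoc : assocLeft F = assocRight F

/-- The `n`-series `[n](t)` of a formal group law, defined by `[0](t) = 0` and
`[n+1](t) = F([n](t), t)`. -/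
def nSeries (Φ : FormalGroupLaw R) : ℕ → PowerSeries R
  | 0 => 0
  | n + 1 => subst2 Φ.F (nSeries Φ n)

open Classical in
/-- Evaluation of a power series at a nilpotent element (the sum is finite). -/
def nilEval (f : PowerSeries R) (a : R) : R :=
  if h : IsNilpotent a then ∑ i ∈ Finset.range h.choose, PowerSeries.coeff i f * a ^ i
  else 0

open Classical in
/-- Evaluation of a two-variable power series at a pair of nilpotent elements. -/
def nilEval₂ (F : MvPowerSeries (Fin 2) R) (a b : R) : R :=
  if h : ∃ N, a ^ N = 0 ∧ b ^ N = 0 then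
    ∑ i ∈ Finset.range h.choose, ∑ j ∈ Finset.range h.choose,
      MvPowerSeries.coeff (mono i j) F * a ^ i * b ^ j
  else 0

open Classical in
/-- The one-variable power series `x ↦ F(x, c)` for `c` nilpotent. -/
def addConst (F : MvPowerSeries (Fin 2) R) (c : R) : PowerSeries R :=
  if h : IsNilpotent c then
    PowerSeries.mk fun n => ∑ j ∈ Finset.range h.choose,
      MvPowerSeries.coeff (mono n j) F * c ^ j
  else 0

/-- A homomorphism from a finite abelian group `A` to the formal group of `F`:
a function with nilpotent values, sending `0` to `0` and `+` to formal addition. -/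
def IsHom (F : MvPowerSeries (Fin 2) R) {A : Type*} [AddCommGroup A] (ℓ : A → R) : Prop :=
  ℓ 0 = 0 ∧ (∀ a, IsNilpotent (ℓ a)) ∧ ∀ a b : A, ℓ (a + b) = nilEval₂ F (ℓ a) (ℓ b)

end FGL

namespace FGL

variable {R : Type*} [CommRing R]

lemma nilEval₂_key (Φ : FormalGroupLaw R) {x y : R} (hx : IsNilpotent x) (hy : IsNilpotent y) :
    ∃ s : R, nilEval₂ Φ.F x y = x + y + x * y * s := by
  obtain ⟨n, hn⟩ := hx
  obtain ⟨m, hm⟩ := hy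
  have hex : ∃ N, x ^ N = 0 ∧ y ^ N = 0 :=
    ⟨n + m, by rw [pow_add, hn, zero_mul], by rw [pow_add, hm, mul_zero]⟩
  rw [nilEval₂, dif_pos hex]
  obtain ⟨hxN, hyN⟩ := hex.choose_spec
  set N := hex.choose with hN
  clear_value N
  clear hN
  match N, hxN, hyN with
  | 0, hxN, hyN =>
    have h10 : (0 : R) = 1 := by simpa using hxN.symm
    haveI := subsingleton_of_zero_eq_one h10
    exact ⟨0, Subsingleton.elim _ _⟩
  | 1, hxN, hyN =>
    have hx0 : x = 0 := by simpa using hxN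
    have hy0 : y = 0 := by simpa using hyN
    refine ⟨0, ?_⟩
    simp [Finset.sum_range_one, hx0, hy0, Φ.left_unit 0]
  | (M + 2), hxN, hyN =>
    refine ⟨∑ i ∈ Finset.range (M + 1), ∑ j ∈ Finset.range (M + 1),
      MvPowerSeries.coeff (mono (i + 1) (j + 1)) Φ.F * x ^ i * y ^ j, ?_⟩
    have h0 : ∑ j ∈ Finset.range (M + 2),
        MvPowerSeries.coeff (mono 0 j) Φ.F * x ^ 0 * y ^ j = y := by
      simp only [Φ.right_unit, pow_zero, mul_one, ite_mul, one_mul, zero_mul]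
      rw [Finset.sum_ite_eq' (Finset.range (M + 2)) 1 (fun j => y ^ j)]
      simp
    have expand : ∀ i, ∑ j ∈ Finset.range (M + 2),
        MvPowerSeries.coeff (mono (i + 1) j) Φ.F * x ^ (i + 1) * y ^ j
        = (x * y) * ∑ j ∈ Finset.range (M + 1),
            MvPowerSeries.coeff (mono (i + 1) (j + 1)) Φ.F * x ^ i * y ^ j
          + (if i = 0 then x else 0) := by
      intro i
      rw [Finset.sum_range_succ']
      congr 1
      · rw [Finset.mul_sum]
        refine Finset.sum_congr rfl fun j _ => ?_
        ring
      · rw [Φ.left_unit]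
        by_cases hi : i = 0 <;> simp [hi]
    rw [Finset.sum_range_succ', h0]
    rw [Finset.sum_congr rfl (fun i _ => expand i)]
    rw [Finset.sum_add_distrib, ← Finset.mul_sum,
      Finset.sum_ite_eq' (Finset.range (M + 1)) 0 (fun _ => x)]
    simp only [Finset.mem_range, Nat.succ_pos, if_true, Nat.zero_lt_succ]
    ring

lemma sub_eq_unit_mul (Φ : FormalGroupLaw R) {A : Type*} [AddCommGroup A] {ℓ : A → R}
    (hℓ : IsHom Φ.F ℓ) (a b : A) :
    ∃ v : Rˣ, ℓ a - ℓ b = (v : R) * ℓ (a - b) := by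
  obtain ⟨h0, hnil, hadd⟩ := hℓ
  obtain ⟨s, hs⟩ := nilEval₂_key Φ (hnil (a - b)) (hnil b)
  have ha : ℓ a = ℓ (a - b) + ℓ b + ℓ (a - b) * ℓ b * s := by
    have h := hadd (a - b) b
    rw [sub_add_cancel] at h
    rw [h, hs]
  have hu : IsUnit (1 + ℓ b * s) :=
    IsNilpotent.isUnit_one_add ((Commute.all (ℓ b) s).isNilpotent_mul_right (hnil b))
  refine ⟨hu.unit, ?_⟩
  rw [hu.unit_spec, ha]
  ring

end FGL

open FGL in
/-- for a homomorphism `ℓ : A → R` from a finite abelian group to the formal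
group of `F`, the discriminant `∏_{a≠b}(ℓ(a)-ℓ(b))` equals a unit times
`∏_{0≠c} ℓ(c)^{|A|}`. -/
theorem discriminant_eq_unit_mul {R : Type*} [CommRing R] (Φ : FormalGroupLaw R)
    {A : Type*} [AddCommGroup A] [Fintype A] [DecidableEq A]
    (ℓ : A → R) (hℓ : IsHom Φ.F ℓ) :
    ∃ u : Rˣ,
      ∏ p ∈ Finset.univ.offDiag, (ℓ p.1 - ℓ p.2) =
        (u : R) * ∏ c ∈ Finset.univ.filter (fun c : A => c ≠ 0), ℓ c ^ Fintype.card A := by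
  have h := fun p : A × A => sub_eq_unit_mul Φ hℓ p.1 p.2
  choose v he using h
  refine ⟨∏ p ∈ Finset.univ.offDiag, v p, ?_⟩
  have hprod : ∏ p ∈ Finset.univ.offDiag, (ℓ p.1 - ℓ p.2)
      = (↑(∏ p ∈ Finset.univ.offDiag, v p) : R) * ∏ p ∈ Finset.univ.offDiag, ℓ (p.1 - p.2) := by
    rw [Units.coe_prod, ← Finset.prod_mul_distrib]
    exact Finset.prod_congr rfl fun p _ => he p
  rw [hprod]
  congr 1
  have hbij : ∏ p ∈ Finset.univ.offDiag, ℓ (p.1 - p.2)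
      = ∏ q ∈ (Finset.univ.filter (fun c : A => c ≠ 0)) ×ˢ (Finset.univ : Finset A), ℓ q.1 := by
    refine Finset.prod_nbij' (fun p => (p.1 - p.2, p.2)) (fun q => (q.1 + q.2, q.2))
      ?_ ?_ ?_ ?_ ?_
    · intro p hp
      simp only [Finset.mem_offDiag, Finset.mem_univ, true_and] at hp
      simp [sub_ne_zero.mpr hp]
    · intro q hq
      simp only [Finset.mem_product, Finset.mem_filter, Finset.mem_univ, true_and] at hq
      simp [Finset.mem_offDiag, add_eq_right, hq.1]
    · intro p _; simp
    · intro q _; simp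
    · intro p _; rfl
  rw [hbij, Finset.prod_product]
  simp [Finset.prod_const, Finset.card_univ]
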